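/- Let ω = (−1 + i·√3)/2 ∈ ℂ (a primitive cube root of unity). Let Γ be a lattice in ℂ², i.e., an additive subgroup of ℂ² that is discrete (it has no accumulation point in ℂ²) and spans ℂ² as a real vector space, and suppose ω·Γ = Γ (Γ is stable under scalar multiplication by ω). Then Γ, regarded as a module over the ring ℤ[ω] of Eisenstein integers acting by complex scalar multiplication, is a free ℤ[ω]-module of rank 2. -/

import Mathlib

noncomputable section EisAux

open Complex

/-- the primitive cube root of unity -/
def ωc : ℂ := (-1 + Complex.I * (Real.sqrt 3 : ℂ)) / 2

lemma ωc_re : ωc.re = -1/2 := by simp [ωc]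
lemma ωc_im : ωc.im = Real.sqrt 3 / 2 := by simp [ωc]

lemma sqrt3_sq : Real.sqrt 3 * Real.sqrt 3 = 3 :=
  Real.mul_self_sqrt (by norm_num)

lemma ωc_mul_ωc : ωc * ωc = -1 - ωc := by
  apply Complex.ext <;>
    simp [Complex.mul_re, Complex.mul_im, ωc_re, ωc_im] <;> nlinarith [sqrt3_sq]

/-- The Eisenstein integers as a subring of ℂ. -/
def Eis : Subring ℂ where
  carrier := {z | ∃ a b : ℤ, z = (a : ℂ) + (b : ℂ) * ωc}
  zero_mem' := ⟨0, 0, by simp⟩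
  one_mem' := ⟨1, 0, by simp⟩
  add_mem' := by
    rintro x y ⟨a, b, rfl⟩ ⟨c, d, rfl⟩
    exact ⟨a + c, b + d, by push_cast; ring⟩
  neg_mem' := by
    rintro x ⟨a, b, rfl⟩
    exact ⟨-a, -b, by push_cast; ring⟩
  mul_mem' := by
    rintro x y ⟨a, b, rfl⟩ ⟨c, d, rfl⟩
    refine ⟨a * c - b * d, a * d + b * c - b * d, ?_⟩
    have h : ωc * ωc = -1 - ωc := ωc_mul_ωc
    push_cast
    linear_combination ((b : ℂ) * d) * h

lemma ωc_mem_Eis : ωc ∈ Eis := ⟨0, 1, by simp⟩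

end EisAux

section EisNorm
open Complex

lemma normSq_eis (a b : ℤ) :
    Complex.normSq ((a : ℂ) + (b : ℂ) * ωc) = ((a^2 - a*b + b^2 : ℤ) : ℝ) := by
  simp only [Complex.normSq_apply, Complex.add_re, Complex.add_im, Complex.mul_re,
    Complex.mul_im, Complex.intCast_re, Complex.intCast_im, ωc_re, ωc_im]
  push_cast
  nlinarith [sqrt3_sq]

lemma eis_norm_nat (z : ℂ) (hz : z ∈ Eis) : ∃ n : ℕ, Complex.normSq z = n := by
  obtain ⟨a, b, rfl⟩ := hz
  refine ⟨(a^2 - a*b + b^2).toNat, ?_⟩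
  rw [normSq_eis]
  have h : (0:ℤ) ≤ a^2 - a*b + b^2 := by nlinarith [sq_nonneg (2*a - b), sq_nonneg b]
  norm_cast
  exact (Int.toNat_of_nonneg h).symm

lemma eis_norm_ge_one (z : ℂ) (hz : z ∈ Eis) (h0 : z ≠ 0) : 1 ≤ Complex.normSq z := by
  obtain ⟨n, hn⟩ := eis_norm_nat z hz
  rcases Nat.eq_zero_or_pos n with h | h
  · exfalso; apply h0
    rw [← Complex.normSq_eq_zero, hn, h, Nat.cast_zero]
  · rw [hn]; exact_mod_cast h

/-- Euclidean division: for x, y in Eis with y ≠ 0, there is q ∈ Eis with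
    small remainder. -/
lemma eis_division (x y : ℂ) (hx : x ∈ Eis) (hy : y ∈ Eis) (hy0 : y ≠ 0) :
    ∃ q ∈ Eis, Complex.normSq (x - q * y) < Complex.normSq y := by
  set z : ℂ := x / y with hz
  set b : ℤ := round (2 * z.im / Real.sqrt 3) with hb
  set a : ℤ := round (z.re + (b : ℝ) / 2) with ha
  refine ⟨(a : ℂ) + (b : ℂ) * ωc, ⟨a, b, rfl⟩, ?_⟩
  have hs3 : (0:ℝ) < Real.sqrt 3 := Real.sqrt_pos.mpr (by norm_num)
  have hq : x - ((a : ℂ) + (b : ℂ) * ωc) * y = (z - ((a : ℂ) + (b : ℂ) * ωc)) * y := by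
    field_simp [hz]
    have hyz : y * z = x := by rw [hz]; field_simp
    linear_combination -hyz
  rw [hq, Complex.normSq_mul]
  have hylt : 0 < Complex.normSq y := Complex.normSq_pos.mpr hy0
  have key : Complex.normSq (z - ((a : ℂ) + (b : ℂ) * ωc)) < 1 := by
    have h1 : |z.re + (b:ℝ)/2 - a| ≤ 1/2 := by
      have := abs_sub_round (z.re + (b : ℝ) / 2)
      simpa [ha] using this
    have h2 : |2 * z.im / Real.sqrt 3 - b| ≤ 1/2 := by
      have := abs_sub_round (2 * z.im / Real.sqrt 3)
      simpa [hb] using this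
    have hre : (z - ((a : ℂ) + (b : ℂ) * ωc)).re = z.re + (b:ℝ)/2 - a := by
      simp [Complex.sub_re, Complex.add_re, Complex.mul_re, ωc_re, ωc_im]
      ring
    have him : (z - ((a : ℂ) + (b : ℂ) * ωc)).im
        = (2 * z.im / Real.sqrt 3 - b) * (Real.sqrt 3 / 2) := by
      simp [Complex.sub_im, Complex.add_im, Complex.mul_im, ωc_re, ωc_im]
      field_simp
    rw [Complex.normSq_apply, hre, him]
    have e1 : (z.re + (b:ℝ)/2 - a)^2 ≤ (1/2)^2 := by
      rw [← _root_.sq_abs]; exact pow_le_pow_left₀ (abs_nonneg _) h1 2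
    have e2 : (2 * z.im / Real.sqrt 3 - b)^2 ≤ (1/2)^2 := by
      rw [← _root_.sq_abs]; exact pow_le_pow_left₀ (abs_nonneg _) h2 2
    nlinarith [sqrt3_sq, sq_nonneg (2 * z.im / Real.sqrt 3 - (b:ℝ))]
  nlinarith [key, hylt]

end EisNorm

section EisPID

/-- Natural-number norm on the Eisenstein integers. -/
noncomputable def natNorm (x : ↥Eis) : ℕ := ⌊Complex.normSq (x : ℂ)⌋₊

lemma natNorm_coe (x : ↥Eis) : ((natNorm x : ℕ) : ℝ) = Complex.normSq (x : ℂ) := by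
  obtain ⟨n, hn⟩ := eis_norm_nat (x : ℂ) x.2
  rw [natNorm, hn, Nat.floor_natCast]

instance : IsPrincipalIdealRing ↥Eis := by
  constructor
  intro I
  by_cases hI : I = ⊥
  · exact ⟨⟨0, by rw [hI, Submodule.span_zero_singleton]⟩⟩
  · obtain ⟨x₀, hx₀I, hx₀⟩ := Submodule.exists_mem_ne_zero_of_ne_bot hI
    set S : Set ℕ := {n : ℕ | ∃ x : ↥Eis, x ∈ I ∧ x ≠ 0 ∧ natNorm x = n} with hS
    have hSne : S.Nonempty := ⟨natNorm x₀, x₀, hx₀I, hx₀, rfl⟩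
    obtain ⟨g, hgI, hg0, hgn⟩ := Nat.sInf_mem hSne
    refine ⟨⟨g, le_antisymm ?_ ?_⟩⟩
    · intro y hy
      have hg0' : (g : ℂ) ≠ 0 := fun h => hg0 (Subtype.ext h)
      obtain ⟨q, hqE, hqlt⟩ := eis_division (y : ℂ) (g : ℂ) y.2 g.2 hg0'
      set Q : ↥Eis := ⟨q, hqE⟩ with hQ
      set r : ↥Eis := y - Q * g with hr
      have hrI : r ∈ I := I.sub_mem hy (I.mul_mem_left Q hgI)
      have hrc : (r : ℂ) = (y : ℂ) - q * (g : ℂ) := by push_cast [hr, hQ]; ring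
      by_cases hr0 : r = 0
      · have : y = Q * g := by
          have := sub_eq_zero.mp (by rw [← hr]; exact_mod_cast congrArg Subtype.val hr0)
          exact this
        rw [Ideal.submodule_span_eq, Ideal.mem_span_singleton]
        exact ⟨Q, by rw [this]; ring⟩
      · exfalso
        have h1 : natNorm r < natNorm g := by
          have := hqlt
          rw [← hrc] at this
          have h2 : ((natNorm r : ℕ) : ℝ) < ((natNorm g : ℕ) : ℝ) := by
            rw [natNorm_coe, natNorm_coe]; exact this
          exact_mod_cast h2
        have h2 : natNorm g ≤ natNorm r := by
          rw [hgn]; exact Nat.sInf_le ⟨r, hrI, hr0, rfl⟩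
        omega
    · rw [Ideal.submodule_span_eq, Ideal.span_le, Set.singleton_subset_iff]
      exact hgI

end EisPID

section EisBasis

lemma eis_coeff_unique {a b c d : ℤ}
    (h : (a : ℂ) + (b : ℂ) * ωc = (c : ℂ) + (d : ℂ) * ωc) : a = c ∧ b = d := by
  have hs3 : (0:ℝ) < Real.sqrt 3 := Real.sqrt_pos.mpr (by norm_num)
  have him := congrArg Complex.im h
  simp only [Complex.add_im, Complex.mul_im, Complex.intCast_im, Complex.intCast_re,
    ωc_im, ωc_re] at him
  have hbd' : b = d := by field_simp at him; exact_mod_cast (mul_right_cancel₀ hs3.ne' (by linarith [him, mul_comm (Real.sqrt 3) (d:ℝ)]) : (b:ℝ) = d)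
  subst hbd'
  have hac : (a : ℂ) = (c : ℂ) := by
    have := add_right_cancel h
    exact this
  exact ⟨by exact_mod_cast hac, rfl⟩

/-- `(1, ω)` as a `ℤ`-basis of the Eisenstein integers. -/
noncomputable def eisBasis : Module.Basis (Fin 2) ℤ ↥Eis := by
  apply Module.Basis.mk (v := ![1, ⟨ωc, ωc_mem_Eis⟩])
  · rw [LinearIndependent.pair_iff]
    intro s t hst
    have h : (s : ℂ) + (t : ℂ) * ωc = ((0:ℤ) : ℂ) + ((0:ℤ) : ℂ) * ωc := by
      have := congrArg (Subtype.val) hst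
      push_cast at this ⊢
      simpa using this
    have := eis_coeff_unique h
    exact ⟨this.1, this.2⟩
  · rintro ⟨z, hz⟩ -
    obtain ⟨a, b, rfl⟩ := hz
    have : (⟨(a : ℂ) + (b : ℂ) * ωc, ⟨a, b, rfl⟩⟩ : ↥Eis)
        = a • (1 : ↥Eis) + b • (⟨ωc, ωc_mem_Eis⟩ : ↥Eis) := by
      apply Subtype.ext
      show (a : ℂ) + (b : ℂ) * ωc = ((a • (1:↥Eis) + b • (⟨ωc, ωc_mem_Eis⟩:↥Eis) : ↥Eis) : ℂ)
      rw [zsmul_eq_mul, zsmul_eq_mul]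
      push_cast
      ring
    rw [this]
    refine Submodule.add_mem _ ?_ ?_
    · exact Submodule.smul_mem _ a (Submodule.subset_span (by simp))
    · exact Submodule.smul_mem _ b (Submodule.subset_span (by simp [Matrix.range_cons]))

lemma finrank_eis : Module.finrank ℤ ↥Eis = 2 := by
  rw [Module.finrank_eq_card_basis eisBasis, Fintype.card_fin]

instance : Module.Free ℤ ↥Eis := Module.Free.of_basis eisBasis

end EisBasis

noncomputable section Main

open Pointwise Module

/-- inclusion of a coefficient pair -/
def eisMk (a b : ℤ) : ↥Eis := ⟨(a : ℂ) + (b : ℂ) * ωc, a, b, rfl⟩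

/-- A subgroup stable by multiplication by the Eisenstein integers, as an `Eis`-submodule. -/
def eisSubmodule (Γ : AddSubgroup (EuclideanSpace ℂ (Fin 2)))
    (h : ∀ (a b : ℤ), ∀ x ∈ Γ, ((a : ℂ) + (b : ℂ) * ωc) • x ∈ Γ) :
    Submodule ↥Eis (EuclideanSpace ℂ (Fin 2)) where
  carrier := Γ
  add_mem' := fun h h' => Γ.add_mem h h'
  zero_mem' := Γ.zero_mem
  smul_mem' := by
    intro c x hx
    obtain ⟨a, b, hc⟩ := c.2
    rw [Subring.smul_def, hc]
    exact h a b x hx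

lemma mem_eisSubmodule {Γ : AddSubgroup (EuclideanSpace ℂ (Fin 2))} {h} {x} :
    x ∈ eisSubmodule Γ h ↔ x ∈ Γ := Iff.rfl

lemma eisMk_coe (a b : ℤ) : ((eisMk a b : ↥Eis) : ℂ) = (a : ℂ) + (b : ℂ) * ωc := rfl

set_option maxHeartbeats 1000000 in
set_option synthInstance.maxHeartbeats 200000 in
/-- A lattice `Γ` in ℂ² stable under scalar multiplication by the primitive cube root of
    unity `ω = (−1 + i√3)/2` is a free module of rank 2 over the Eisenstein integers
    ℤ[ω] = {a + b·ω : a, b ∈ ℤ}: there are `e₁, e₂ ∈ Γ` such that `Γ` consists exactly of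
    the ℤ[ω]-combinations of `e₁, e₂`, each element of `Γ` being such a combination in a
    unique way. -/
theorem lattice_stable_under_omega_free_rank_two
    (Γ : AddSubgroup (EuclideanSpace ℂ (Fin 2)))
    (hdisc : ∀ z : EuclideanSpace ℂ (Fin 2),
      ¬ AccPt z (Filter.principal (Γ : Set (EuclideanSpace ℂ (Fin 2)))))
    (hspan : Submodule.span ℝ (Γ : Set (EuclideanSpace ℂ (Fin 2))) = ⊤)
    (hω : ((-1 + Complex.I * (Real.sqrt 3 : ℂ)) / 2) • (Γ : Set (EuclideanSpace ℂ (Fin 2)))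
      = (Γ : Set (EuclideanSpace ℂ (Fin 2)))) :
    ∃ e₁ e₂ : EuclideanSpace ℂ (Fin 2), e₁ ∈ Γ ∧ e₂ ∈ Γ ∧
      (∀ a b c d : ℤ,
        ((a : ℂ) + (b : ℂ) * ((-1 + Complex.I * (Real.sqrt 3 : ℂ)) / 2)) • e₁ +
          ((c : ℂ) + (d : ℂ) * ((-1 + Complex.I * (Real.sqrt 3 : ℂ)) / 2)) • e₂ ∈ Γ) ∧
      ∀ v ∈ Γ, ∃! p : (ℤ × ℤ) × ℤ × ℤ,
        v = ((p.1.1 : ℂ) + (p.1.2 : ℂ) * ((-1 + Complex.I * (Real.sqrt 3 : ℂ)) / 2)) • e₁ +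
            ((p.2.1 : ℂ) + (p.2.2 : ℂ) * ((-1 + Complex.I * (Real.sqrt 3 : ℂ)) / 2)) • e₂ := by
  classical
  have hωΓ : ∀ x ∈ Γ, ωc • x ∈ Γ := by
    intro x hx
    have h1 : ωc • x ∈ ωc • (Γ : Set (EuclideanSpace ℂ (Fin 2))) := Set.smul_mem_smul_set hx
    rwa [show ωc • (Γ : Set (EuclideanSpace ℂ (Fin 2))) = Γ from hω] at h1
  have combo_mem : ∀ (a b : ℤ) (x : EuclideanSpace ℂ (Fin 2)), x ∈ Γ →
      ((a : ℂ) + (b : ℂ) * ωc) • x ∈ Γ := by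
    intro a b x hx
    rw [add_smul, mul_smul]
    refine Γ.add_mem ?_ ?_
    · rw [Int.cast_smul_eq_zsmul]; exact AddSubgroup.zsmul_mem Γ hx a
    · rw [Int.cast_smul_eq_zsmul]; exact AddSubgroup.zsmul_mem Γ (hωΓ x hx) b
  let M : Submodule ↥Eis (EuclideanSpace ℂ (Fin 2)) := eisSubmodule Γ combo_mem
  let L : Submodule ℤ (EuclideanSpace ℂ (Fin 2)) := M.restrictScalars ℤ
  have hLset : (L : Set (EuclideanSpace ℂ (Fin 2))) = (Γ : Set (EuclideanSpace ℂ (Fin 2))) := rfl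
  haveI hdiscL : DiscreteTopology ↥L :=
    discreteTopology_subtype_iff.mpr (fun x _ => Filter.not_neBot.mp (hdisc x))
  haveI : IsZLattice ℝ L := ⟨by rw [hLset]; exact hspan⟩
  haveI : Module.Finite ℤ ↥L := ZLattice.module_finite ℝ L
  haveI : Module.Free ℤ ↥L := ZLattice.module_free ℝ L
  have hrank4 : finrank ℤ ↥L = 4 := by
    rw [ZLattice.rank ℝ L,
      ← Module.finrank_mul_finrank ℝ ℂ (EuclideanSpace ℂ (Fin 2)),
      Complex.finrank_real_complex, finrank_euclideanSpace]
    simp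
  let eLM : ↥L ≃ₗ[ℤ] ↥M :=
    (Submodule.restrictScalarsEquiv ℤ ↥Eis (EuclideanSpace ℂ (Fin 2)) M).restrictScalars ℤ
  haveI : Module.Finite ℤ ↥M := Module.Finite.equiv eLM
  haveI : Module.Finite ↥Eis ↥M := Module.Finite.of_restrictScalars_finite ℤ ↥Eis ↥M
  haveI : NoZeroSMulDivisors ↥Eis ↥M := by
    constructor
    intro c m hcm
    by_cases hc : c = 0
    · exact Or.inl hc
    · refine Or.inr ?_
      have hcoe : (c : ℂ) • (m : EuclideanSpace ℂ (Fin 2)) = 0 := by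
        have h2 := congrArg Subtype.val hcm
        rw [Submodule.coe_smul, Subring.smul_def] at h2
        exact h2
      have hc0 : (c : ℂ) ≠ 0 := fun h => hc (Subtype.ext h)
      rcases smul_eq_zero.mp hcoe with h | h
      · exact absurd h hc0
      · exact Subtype.ext h
  haveI : Module.Free ↥Eis ↥M := Module.free_of_finite_type_torsion_free'
  have hrank2 : finrank ↥Eis ↥M = 2 := by
    have h := Module.finrank_mul_finrank ℤ ↥Eis ↥M
    rw [finrank_eis, ← eLM.finrank_eq, hrank4] at h
    omega
  let bb := Module.finBasisOfFinrankEq ↥Eis ↥M hrank2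
  have hco : ∀ (s t : ↥Eis), ((s • bb 0 + t • bb 1 : ↥M) : EuclideanSpace ℂ (Fin 2))
      = (s : ℂ) • (bb 0 : EuclideanSpace ℂ (Fin 2)) + (t : ℂ) • (bb 1 : EuclideanSpace ℂ (Fin 2)) := by
    intro s t
    rw [Submodule.coe_add, Submodule.coe_smul, Submodule.coe_smul,
      Subring.smul_def, Subring.smul_def]
  refine ⟨(bb 0 : EuclideanSpace ℂ (Fin 2)), (bb 1 : EuclideanSpace ℂ (Fin 2)),
    (bb 0).2, (bb 1).2, ?_, ?_⟩
  · intro a b c d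
    exact Γ.add_mem (combo_mem a b _ (bb 0).2) (combo_mem c d _ (bb 1).2)
  · intro v hv
    set m : ↥M := ⟨v, hv⟩ with hm
    obtain ⟨a0, b0, h0⟩ := (bb.repr m 0).2
    obtain ⟨c0, d0, h1⟩ := (bb.repr m 1).2
    have hsum : (bb.repr m 0) • bb 0 + (bb.repr m 1) • bb 1 = m := by
      have h2 := bb.sum_repr m
      rwa [Fin.sum_univ_two] at h2
    refine ⟨((a0, b0), (c0, d0)), ?_, ?_⟩
    · show v = ((a0 : ℂ) + (b0 : ℂ) * ωc) • (bb 0 : EuclideanSpace ℂ (Fin 2))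
          + ((c0 : ℂ) + (d0 : ℂ) * ωc) • (bb 1 : EuclideanSpace ℂ (Fin 2))
      have h2 := congrArg Subtype.val hsum
      rw [hco, h0, h1] at h2
      exact h2.symm
    · rintro ⟨⟨a1, b1⟩, c1, d1⟩ hq
      simp only at hq
      have hqm : (eisMk a1 b1) • bb 0 + (eisMk c1 d1) • bb 1 = m := by
        apply Subtype.ext
        rw [hco, eisMk_coe, eisMk_coe]
        exact hq.symm
      have hsum2 : (∑ i, (![eisMk a1 b1, eisMk c1 d1]) i • bb i) = m := by
        rw [Fin.sum_univ_two]
        simpa using hqm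
      have hrepr : ⇑(bb.repr m) = ![eisMk a1 b1, eisMk c1 d1] := by
        rw [← hsum2, bb.repr_sum_self]
      have h00 : ((bb.repr m 0 : ↥Eis) : ℂ) = (a1 : ℂ) + (b1 : ℂ) * ωc := by
        rw [show bb.repr m 0 = eisMk a1 b1 from by rw [hrepr]; rfl]
        rfl
      have h11 : ((bb.repr m 1 : ↥Eis) : ℂ) = (c1 : ℂ) + (d1 : ℂ) * ωc := by
        rw [show bb.repr m 1 = eisMk c1 d1 from by rw [hrepr]; rfl]
        rfl
      obtain ⟨ha, hb⟩ := eis_coeff_unique (h00.symm.trans h0)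
      obtain ⟨hc, hd⟩ := eis_coeff_unique (h11.symm.trans h1)
      simp [ha, hb, hc, hd]

end Main
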